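/- Under the setup, every simple cycle of Ĝ — i.e., every closed walk in Ĝ of positive length that repeats no vertex except that its initial and final vertices coincide — has all of its edges in G. (The consequence of Lemmas 4.1 and 4.2 used to deduce Theorem 3.5 for G_δ from the corresponding statements for Ĝ_δ.) -/

import Mathlib

open SimpleGraph

private lemma cross_lemma {V : Type*} {G : SimpleGraph V} (P : V → Prop) :
    ∀ {x y : V} (p : G.Walk x y), P x → ¬ P y →
      ∃ u w : V, G.Adj u w ∧ s(u, w) ∈ p.edges ∧ P u ∧ ¬ P w := by
  intro x y p
  induction p with
  | nil => intro hx hy; exact absurd hx hy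
  | @cons x z y h q ih =>
    intro hx hy
    by_cases hz : P z
    · obtain ⟨u, w, h1, h2, h3, h4⟩ := ih hz hy
      exact ⟨u, w, h1, by simp [h2], h3, h4⟩
    · exact ⟨x, z, h, by simp, hx, hz⟩

private lemma aux_lemma {V : Type*} [DecidableEq V]
    (F : SimpleGraph V) (hFacyclic : F.IsAcyclic)
    (root : V → V) (hrootConst : ∀ u v : V, F.Reachable u v → root u = root v)
    (pathToRoot : (v : V) → F.Walk v (root v))
    (S : Set (Sym2 V))
    (Gh : SimpleGraph V) (hGhE : Gh.edgeSet ⊆ F.edgeSet ∪ S)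
    (a b : V) (hab : F.Adj a b)
    (hnr : ¬ (F.deleteEdges {s(a, b)}).Reachable a (root a))
    {v : V} (c : Gh.Walk v v) (hc : c.IsCycle) (he : s(a, b) ∈ c.edges) :
    ∃ u w : V, s(u, w) ∈ S ∧ s(a, b) ∈ (pathToRoot u).edges := by
  classical
  have hbr : ¬ (F.deleteEdges {s(a, b)}).Reachable a b :=
    ((isAcyclic_iff_forall_adj_isBridge.mp hFacyclic) hab)
  set P : V → Prop := fun x => (F.deleteEdges {s(a, b)}).Reachable x a with hP
  have hPa : P a := Reachable.refl a
  have hPb : ¬ P b := fun h => hbr h.symm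
  have ha : a ∈ c.support := c.fst_mem_support_of_mem_edges he
  set q := c.rotate a ha with hqdef
  have hq : q.IsCycle := hc.rotate ha
  have heq : s(a, b) ∈ q.edges := (c.rotate_edges a ha).mem_iff.mpr he
  have hb : b ∈ q.support := q.snd_mem_support_of_mem_edges heq
  set q1 := q.takeUntil b hb with hq1
  set q2 := q.dropUntil b hb with hq2
  have hspec : q1.append q2 = q := q.take_spec hb
  have hnd : (q1.edges ++ q2.edges).Nodup := by
    rw [← Walk.edges_append, hspec]; exact hq.edges_nodup
  have hdisj : ∀ x, x ∈ q1.edges → x ∉ q2.edges :=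
    fun x hx => (List.disjoint_of_nodup_append hnd) hx
  obtain ⟨u1, w1, hadj1, hm1, hu1, hw1⟩ := cross_lemma P q1 hPa hPb
  obtain ⟨u2, w2, hadj2, hm2, hu2, hw2⟩ :=
    cross_lemma (fun x => ¬ P x) q2 hPb (not_not_intro hPa)
  -- pick a crossing edge different from s(a,b)
  have hfind : ∃ u w : V, Gh.Adj u w ∧ P u ∧ ¬ P w ∧ s(u, w) ≠ s(a, b) := by
    by_cases h1 : s(u1, w1) = s(a, b)
    · refine ⟨w2, u2, hadj2.symm, not_not.mp hw2, hu2, ?_⟩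
      intro h2
      have : s(a, b) ∈ q2.edges := by
        rw [← h2, Sym2.eq_swap]; exact hm2
      exact hdisj _ (h1 ▸ hm1) this
    · exact ⟨u1, w1, hadj1, hu1, hw1, h1⟩
  obtain ⟨u, w, hadj, hu, hw, hne⟩ := hfind
  have hS : s(u, w) ∈ S := by
    rcases hGhE (Gh.mem_edgeSet.mpr hadj) with hF | hS
    · exfalso
      have : (F.deleteEdges {s(a, b)}).Adj u w :=
        SimpleGraph.deleteEdges_adj.mpr ⟨F.mem_edgeSet.mp hF, by simpa using hne⟩
      exact hw (this.symm.reachable.trans hu)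
    · exact hS
  refine ⟨u, w, hS, ?_⟩
  by_contra hpe
  have hnotin : ∀ e ∈ (pathToRoot u).edges, e ∉ ({s(a, b)} : Set (Sym2 V)) := by
    intro f hf hfs
    exact hpe (by simpa using hfs ▸ hf)
  have hreach : (F.deleteEdges {s(a, b)}).Reachable u (root u) :=
    ⟨(pathToRoot u).toDeleteEdges {s(a, b)} hnotin⟩
  have hru : root u = root a := hrootConst u a (hu.mono (SimpleGraph.deleteEdges_le _))
  rw [hru] at hreach
  exact hnr (hu.symm.trans hreach)

open SimpleGraph

/-- Consequence of Lemmas 4.1 and 4.2 used to deduce Theorem 3.5: every simple cycle of Ĝ has all of its edges in G. -/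
theorem simple_cycles_of_Ghat_in_G
    {V : Type*} [Fintype V] [DecidableEq V]
    -- `K` is a finite connected simple graph on vertex set `V`
    (K : SimpleGraph V) (hK : K.Connected)
    -- `F` is a spanning forest of `K` (an acyclic subgraph on all of `V`)
    (F : SimpleGraph V) (hFK : F ≤ K) (hFacyclic : F.IsAcyclic)
    -- a choice of root in each connected component of `F`
    (root : V → V)
    (hrootReach : ∀ v : V, F.Reachable v (root v))
    (hrootConst : ∀ u v : V, F.Reachable u v → root u = root v)
    -- `pathToRoot v` is the unique path in `F` from `v` to the root of its component
    (pathToRoot : (v : V) → F.Walk v (root v))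
    (hpathToRoot : ∀ v : V, (pathToRoot v).IsPath)
    -- `Eneg` and `Epos` are disjoint sets of edges of `K`, disjoint from the edges of `F`
    (Eneg Epos : Set (Sym2 V))
    (hEnegK : Eneg ⊆ K.edgeSet) (hEposK : Epos ⊆ K.edgeSet)
    (hdisjNP : Disjoint Eneg Epos)
    (hdisjNF : Disjoint Eneg F.edgeSet) (hdisjPF : Disjoint Epos F.edgeSet)
    -- `That` (= T̂) is the spanning tree with edge set E(F) ∪ Eneg
    (That : SimpleGraph V)
    (hThatEdges : That.edgeSet = F.edgeSet ∪ Eneg)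
    (hThatTree : That.IsTree)
    -- `GEdges` is the edge set of the output graph G: the union over e = (u,v) ∈ Eneg ∪ Epos
    -- of {e} ∪ path(u) ∪ path(v); `GVerts` is the set of vertices incident to an edge of G
    (GEdges : Set (Sym2 V))
    (hGEdges : GEdges = {s : Sym2 V | ∃ u v : V, s(u, v) ∈ Eneg ∪ Epos ∧
        (s = s(u, v) ∨ s ∈ (pathToRoot u).edges ∨ s ∈ (pathToRoot v).edges)})
    (GVerts : Set V)
    (hGVerts : GVerts = {x : V | ∃ s ∈ GEdges, x ∈ s}) :
    ∀ (v : V) (c : (SimpleGraph.fromEdgeSet (F.edgeSet ∪ Eneg ∪ Epos)).Walk v v),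
      c.IsCycle → ∀ e ∈ c.edges, e ∈ GEdges := by

    intro v c hc e he
    have heE := c.edges_subset_edgeSet he
    rw [SimpleGraph.edgeSet_fromEdgeSet] at heE
    induction e using Sym2.ind with
    | _ a b =>
    have hGhE : (SimpleGraph.fromEdgeSet (F.edgeSet ∪ Eneg ∪ Epos)).edgeSet ⊆
        F.edgeSet ∪ (Eneg ∪ Epos) := by
      rw [SimpleGraph.edgeSet_fromEdgeSet, Set.union_assoc]
      exact Set.diff_subset
    rcases heE.1 with (hF | hN) | hP
    · -- F-edge case
      have hab : F.Adj a b := F.mem_edgeSet.mp hF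
      have hbr : ¬ (F.deleteEdges {s(a, b)}).Reachable a b :=
        ((isAcyclic_iff_forall_adj_isBridge.mp hFacyclic) hab)
      by_cases hra : (F.deleteEdges {s(a, b)}).Reachable a (root a)
      · -- root lies on a's side: use the symmetric version with b
        have hswap : s(b, a) = s(a, b) := Sym2.eq_swap
        have hrb : root b = root a := hrootConst b a hab.symm.reachable
        have hnr' : ¬ (F.deleteEdges {s(b, a)}).Reachable b (root b) := by
          rw [hswap, hrb]
          intro h
          exact hbr (hra.trans h.symm)
        have he' : s(b, a) ∈ c.edges := by rw [hswap]; exact he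
        obtain ⟨u, w, hS, hpath⟩ := aux_lemma F hFacyclic root hrootConst pathToRoot
          (Eneg ∪ Epos) _ hGhE b a hab.symm hnr' c hc he'
        rw [hGEdges]
        exact ⟨u, w, hS, Or.inr (Or.inl (hswap ▸ hpath))⟩
      · obtain ⟨u, w, hS, hpath⟩ := aux_lemma F hFacyclic root hrootConst pathToRoot
          (Eneg ∪ Epos) _ hGhE a b hab hra c hc he
        rw [hGEdges]
        exact ⟨u, w, hS, Or.inr (Or.inl hpath)⟩
    · rw [hGEdges]
      exact ⟨a, b, Or.inl hN, Or.inl rfl⟩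
    · rw [hGEdges]
      exact ⟨a, b, Or.inr hP, Or.inl rfl⟩
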